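/- (Theorem 1) Let H ≥ 1 and M ≥ 1 be integers and α, γ, R > 0. Let y¹, …, y^M : {0,…,H−1} → ℝⁿ be expert demonstrations with initial states y₀^m = y^m(0). For each initial state x ∈ ℝⁿ, let ŷ(x) : {0,…,H−1} → ℝⁿ denote the policy rollout starting from x, and assume the rollouts satisfy the discrete contraction property: for all x, x' ∈ ℝⁿ and all i ∈ {0,…,H−1}, ‖ŷ(x)_i − ŷ(x')_i‖₂ ≤ α e^{−γ i/H} ‖x − x'‖₂. Let ℓ denote the mean squared error, and write ŷ^m = ŷ(y₀^m). Suppose x₀ ∈ ℝⁿ satisfies x₀ ≠ y₀^m for all m and the multi-focal ellipse assumption Σ_{m=1}^{M} ‖x₀ − y₀^m‖₂ ≤ R, and suppose the discrepancy measure satisfies the triangle inequality ℓ(ŷ(x₀), y^m) ≤ ℓ(ŷ(x₀), ŷ^m) + ℓ(ŷ^m, y^m) for every m. Then the loss L(x₀) = Σ_{m=1}^{M} λ_m(x₀) ℓ(ŷ(x₀), y^m) satisfies L(x₀) ≤ Σ_{m=1}^{M} λ_m(x₀) ℓ(ŷ^m, y^m) + α² R² (e^{−2γ} − 1) / (H ·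 M · (e^{−2γ/H} − 1)). -/

import Mathlib

/-- Mean squared error between two length-`H` trajectories in `ℝⁿ`. -/
noncomputable def mse {n H : ℕ} (a b : Fin H → EuclideanSpace ℝ (Fin n)) : ℝ :=
  (1 / H : ℝ) * ∑ i, ‖a i - b i‖ ^ 2

/-- Weights `λ_m(x) = (‖x − y₀^m‖₂²)⁻¹ / Σ_{m'} (‖x − y₀^{m'}‖₂²)⁻¹`. -/
noncomputable def lam {n M : ℕ} (y0 : Fin M → EuclideanSpace ℝ (Fin n))
    (x : EuclideanSpace ℝ (Fin n)) (m : Fin M) : ℝ :=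
  (‖x - y0 m‖ ^ 2)⁻¹ / ∑ m', (‖x - y0 m'‖ ^ 2)⁻¹

/-- **Theorem 1.** Under the discrete contraction property of the rollouts,
the multi-focal ellipse assumption on the initial state `x₀`, and the triangle inequality
for the MSE discrepancy, the loss `L(x₀) = Σ_m λ_m(x₀) ℓ(ŷ(x₀), y^m)` is upper-bounded by
`Σ_m λ_m(x₀) ℓ(ŷ^m, y^m) + α² R² (e^{−2γ} − 1) / (H M (e^{−2γ/H} − 1))`. -/
theorem oos_loss_upper_bound {n : ℕ} (H M : ℕ) (hH : 0 < H) (hM : 0 < M)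
    (α γ R : ℝ) (hα : 0 < α) (hγ : 0 < γ) (hR : 0 < R)
    (y : Fin M → Fin H → EuclideanSpace ℝ (Fin n))
    (y0 : Fin M → EuclideanSpace ℝ (Fin n))
    (hy0 : ∀ m, y0 m = y m ⟨0, hH⟩)
    (rollout : EuclideanSpace ℝ (Fin n) → Fin H → EuclideanSpace ℝ (Fin n))
    (hcontr : ∀ x x' : EuclideanSpace ℝ (Fin n), ∀ i : Fin H,
      ‖rollout x i - rollout x' i‖ ≤ α * Real.exp (-γ * (i : ℕ) / H) * ‖x - x'‖)
    (x0 : EuclideanSpace ℝ (Fin n))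
    (hx0 : ∀ m, x0 ≠ y0 m)
    (hellipse : ∑ m, ‖x0 - y0 m‖ ≤ R)
    (htri : ∀ m : Fin M,
      mse (rollout x0) (y m) ≤
        mse (rollout x0) (rollout (y0 m)) + mse (rollout (y0 m)) (y m)) :
    ∑ m, lam y0 x0 m * mse (rollout x0) (y m) ≤
      ∑ m, lam y0 x0 m * mse (rollout (y0 m)) (y m) +
        α ^ 2 * R ^ 2 * (Real.exp (-2 * γ) - 1) /
          (H * M * (Real.exp (-2 * γ / H) - 1)) := by

  have hHr : (0:ℝ) < H := by exact_mod_cast hH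
  have hMr : (0:ℝ) < M := by exact_mod_cast hM
  have hdpos : ∀ m, 0 < ‖x0 - y0 m‖ :=
    fun m => norm_pos_iff.mpr (sub_ne_zero.mpr (hx0 m))
  set S : ℝ := ∑ m, (‖x0 - y0 m‖ ^ 2)⁻¹ with hSdef
  have hSpos : 0 < S :=
    Finset.sum_pos (fun m _ => inv_pos.mpr (pow_pos (hdpos m) 2))
      ⟨⟨0, hM⟩, Finset.mem_univ _⟩
  have hlam : ∀ m, lam y0 x0 m = (‖x0 - y0 m‖ ^ 2)⁻¹ / S := fun m => rfl
  have hlamnn : ∀ m, 0 ≤ lam y0 x0 m := fun m => by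
    rw [hlam]; positivity
  -- geometric sum
  set r : ℝ := Real.exp (-2 * γ / H) with hr
  have hrlt : r < 1 := by
    rw [hr, Real.exp_lt_one_iff]
    have h2 : (0:ℝ) < 2 * γ / H := by positivity
    have he : -2 * γ / (H:ℝ) = -(2 * γ / H) := by ring
    linarith
  have hrne : r ≠ 1 := ne_of_lt hrlt
  have hrne1 : r - 1 ≠ 0 := by intro h; apply hrne; linarith
  set G : ℝ := ∑ i : Fin H, Real.exp (-2 * γ * (i : ℕ) / H) with hG
  have hGpos : 0 < G :=
    Finset.sum_pos (fun i _ => Real.exp_pos _) ⟨⟨0, hH⟩, Finset.mem_univ _⟩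
  have hGeq : ∀ i : Fin H, Real.exp (-2 * γ * (i : ℕ) / H) = r ^ (i : ℕ) := by
    intro i
    rw [hr, ← Real.exp_nat_mul]
    congr 1
    ring
  have hGval : G = (Real.exp (-2 * γ) - 1) / (r - 1) := by
    rw [hG]
    simp_rw [hGeq]
    rw [Fin.sum_univ_eq_sum_range (fun i => r ^ i) H, geom_sum_eq hrne]
    congr 2
    rw [hr, ← Real.exp_nat_mul]
    congr 1
    field_simp
  -- per-m cross bound
  have hcross : ∀ m, mse (rollout x0) (rollout (y0 m)) ≤
      (1 / H) * (α ^ 2 * G * ‖x0 - y0 m‖ ^ 2) := by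
    intro m
    unfold mse
    apply mul_le_mul_of_nonneg_left _ (by positivity : (0:ℝ) ≤ 1 / H)
    calc ∑ i, ‖rollout x0 i - rollout (y0 m) i‖ ^ 2
        ≤ ∑ i : Fin H, α ^ 2 * Real.exp (-2 * γ * (i : ℕ) / H) * ‖x0 - y0 m‖ ^ 2 := by
          apply Finset.sum_le_sum
          intro i _
          have h1 := hcontr x0 (y0 m) i
          have h2 : ‖rollout x0 i - rollout (y0 m) i‖ ^ 2 ≤
              (α * Real.exp (-γ * (i : ℕ) / H) * ‖x0 - y0 m‖) ^ 2 :=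
            pow_le_pow_left₀ (norm_nonneg _) h1 2
          refine h2.trans_eq ?_
          have hexp : Real.exp (-γ * (i : ℕ) / H) ^ 2 = Real.exp (-2 * γ * (i : ℕ) / H) := by
            rw [← Real.exp_nat_mul]
            congr 1
            push_cast
            ring
          rw [mul_pow, mul_pow, hexp]
      _ = α ^ 2 * G * ‖x0 - y0 m‖ ^ 2 := by
          rw [hG, Finset.mul_sum, Finset.sum_mul]
  -- sum of weighted cross terms
  have hsum : ∑ m, lam y0 x0 m * mse (rollout x0) (rollout (y0 m)) ≤
      M * (α ^ 2 * G / (H * S)) := by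
    calc ∑ m, lam y0 x0 m * mse (rollout x0) (rollout (y0 m))
        ≤ ∑ _m : Fin M, α ^ 2 * G / (H * S) := by
          apply Finset.sum_le_sum
          intro m _
          refine (mul_le_mul_of_nonneg_left (hcross m) (hlamnn m)).trans_eq ?_
          rw [hlam]
          have hdne : ‖x0 - y0 m‖ ^ 2 ≠ 0 := (pow_pos (hdpos m) 2).ne'
          have hdne' : ‖x0 - y0 m‖ ≠ 0 := (hdpos m).ne'
          field_simp
      _ = M * (α ^ 2 * G / (H * S)) := by
          rw [Finset.sum_const, Finset.card_univ, Fintype.card_fin, nsmul_eq_mul]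
  -- Cauchy–Schwarz / ellipse bound : M * M ≤ R ^ 2 * S
  have hCS : (M : ℝ) * M ≤ R ^ 2 * S := by
    have h1 : ((M : ℝ)) ^ 2 ≤ (∑ m, ‖x0 - y0 m‖ ^ 2) * S := by
      have := Finset.sum_mul_sq_le_sq_mul_sq Finset.univ
        (fun m => ‖x0 - y0 m‖) (fun m => ‖x0 - y0 m‖⁻¹)
      have heq : ∀ m : Fin M, ‖x0 - y0 m‖ * ‖x0 - y0 m‖⁻¹ = 1 := fun m =>
        mul_inv_cancel₀ (hdpos m).ne'
      simp only [heq, Finset.sum_const, Finset.card_univ, Fintype.card_fin,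
        nsmul_eq_mul, mul_one] at this
      have hS2 : ∑ m, (‖x0 - y0 m‖⁻¹) ^ 2 = S := by
        rw [hSdef]
        congr 1
        ext m
        rw [← inv_pow]
      rw [hS2] at this
      calc ((M:ℝ)) ^ 2 = ((M:ℝ) * 1) ^ 2 := by ring
        _ ≤ (∑ m, ‖x0 - y0 m‖ ^ 2) * S := by rw [mul_one]; exact this
    have h2 : ∑ m, ‖x0 - y0 m‖ ^ 2 ≤ R ^ 2 := by
      calc ∑ m, ‖x0 - y0 m‖ ^ 2 ≤ (∑ m, ‖x0 - y0 m‖) ^ 2 :=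
            Finset.sum_sq_le_sq_sum_of_nonneg (fun m _ => norm_nonneg _)
        _ ≤ R ^ 2 := by
            apply pow_le_pow_left₀ (Finset.sum_nonneg fun m _ => norm_nonneg _) hellipse
    nlinarith [mul_le_mul_of_nonneg_right h2 hSpos.le]
  -- combine
  have hfinal : (M : ℝ) * (α ^ 2 * G / (H * S)) ≤ α ^ 2 * R ^ 2 * G / (H * M) := by
    rw [mul_div_assoc', div_le_div_iff₀ (by positivity) (by positivity)]
    nlinarith [mul_le_mul_of_nonneg_left hCS (by positivity : (0:ℝ) ≤ α ^ 2 * G * H)]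
  have hrhs : α ^ 2 * R ^ 2 * (Real.exp (-2 * γ) - 1) / (H * M * (r - 1)) =
      α ^ 2 * R ^ 2 * G / (H * M) := by
    rw [hGval]
    rw [div_eq_div_iff (by positivity) (by positivity)]
    field_simp
  calc ∑ m, lam y0 x0 m * mse (rollout x0) (y m)
      ≤ ∑ m, lam y0 x0 m *
          (mse (rollout x0) (rollout (y0 m)) + mse (rollout (y0 m)) (y m)) :=
        Finset.sum_le_sum fun m _ => mul_le_mul_of_nonneg_left (htri m) (hlamnn m)
    _ = ∑ m, lam y0 x0 m * mse (rollout (y0 m)) (y m) +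
          ∑ m, lam y0 x0 m * mse (rollout x0) (rollout (y0 m)) := by
        rw [← Finset.sum_add_distrib]
        congr 1; ext m; ring
    _ ≤ ∑ m, lam y0 x0 m * mse (rollout (y0 m)) (y m) +
          α ^ 2 * R ^ 2 * (Real.exp (-2 * γ) - 1) / (H * M * (r - 1)) := by
        apply add_le_add_right
        rw [hrhs]
        exact hsum.trans hfinal
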